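/- Let X be a Banach lattice and T ∈ L(X) a positive invertible isometry (i.e., a bijective linear isometry with T ≥ 0). Then T is a lattice isomorphism: T(x ∨ y) = Tx ∨ Ty for all x, y ∈ X, and T⁻¹ is also positive. -/

import Mathlib

section Aux

variable {X : Type*} [NormedAddCommGroup X] [Lattice X] [HasSolidNorm X] [IsOrderedAddMonoid X]

lemma aux_inf_add_eq_zero {a b c : X} (ha : 0 ≤ a) (hb : 0 ≤ b) (hc : 0 ≤ c)
    (hab : a ⊓ b = 0) (hac : a ⊓ c = 0) : a ⊓ (b + c) = 0 := by
  refine le_antisymm ?_ (le_inf ha (add_nonneg hb hc))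
  have h1 : a ⊓ (b + c) ≤ (a ⊓ b) + c := by
    rw [inf_add a b c]
    exact le_inf (inf_le_left.trans (le_add_of_nonneg_right hc)) inf_le_right
  rw [hab, zero_add] at h1
  calc a ⊓ (b + c) ≤ a ⊓ c := le_inf inf_le_left h1
    _ = 0 := hac

lemma aux_abs_sub_of_disjoint {p v : X} (h : p ⊓ v = 0) : |p - v| = p + v := by
  rw [inf_comm p v] at h
  have h2 := sup_sub_inf_eq_abs_sub v p
  have h3 := inf_add_sup v p
  rw [h, sub_zero] at h2
  rw [h, zero_add] at h3
  rw [← h2, h3, add_comm]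

lemma aux_inf_nsmul_eq_zero {p q : X} (hp : 0 ≤ p) (hq : 0 ≤ q)
    (h : p ⊓ q = 0) : ∀ m : ℕ, p ⊓ (m • q) = 0 := by
  intro m
  induction m with
  | zero => simpa using inf_eq_right.mpr hp
  | succ m ih =>
      rw [succ_nsmul]
      exact aux_inf_add_eq_zero hp (nsmul_nonneg hq m) hq ih h

end Aux

/-- Abramovich. On a Banach lattice, a positive invertible (bijective)
linear isometry `T` is a lattice isomorphism: `T (x ⊔ y) = T x ⊔ T y` for all `x, y`,
and its inverse is also positive. -/
theorem positive_invertible_isometry_is_lattice_iso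
    (X : Type*) [NormedAddCommGroup X] [Lattice X] [HasSolidNorm X] [IsOrderedAddMonoid X] [NormedSpace ℝ X] [CompleteSpace X]
    (T : X →ₗ[ℝ] X) (hbij : Function.Bijective T)
    (hiso : ∀ x, ‖T x‖ = ‖x‖) (hpos : ∀ x, 0 ≤ x → 0 ≤ T x) :
    (∀ x y : X, T (x ⊔ y) = T x ⊔ T y) ∧
    (∀ y : X, 0 ≤ y → 0 ≤ (LinearEquiv.ofBijective T hbij).symm y) := by
  set E := LinearEquiv.ofBijective T hbij with hE
  have hEapp : ∀ z : X, E z = T z := fun z => rfl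
  have hTmono : ∀ u v : X, u ≤ v → T u ≤ T v := by
    intro u v h
    have h0 : 0 ≤ T (v - u) := hpos _ (sub_nonneg.mpr h)
    rw [map_sub] at h0
    exact sub_nonneg.mp h0
  have key : ∀ y : X, 0 ≤ y → 0 ≤ E.symm y := by
    intro y hy
    set x := E.symm y with hx
    have hTx : T x = y := by rw [← hEapp]; exact E.apply_symm_apply y
    set p := x⁺ with hp
    set q := x⁻ with hq
    have hpq : p - q = x := posPart_sub_negPart x
    have hp0 : 0 ≤ p := posPart_nonneg x
    have hq0 : 0 ≤ q := negPart_nonneg x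
    have hdisj : p ⊓ q = 0 := posPart_inf_negPart_eq_zero x
    set a := T q with haq
    set b := T p with hbp
    have ha0 : 0 ≤ a := hpos q hq0
    have hba : b - a = y := by rw [haq, hbp, ← map_sub, hpq, hTx]
    -- the key norm inequality
    have step : ∀ n : ℕ, ‖y + (n + 2) • a‖ ≤ ‖y + n • a‖ := by
      intro n
      have e1 : y + (n + 2) • a = T (p + (n + 1) • q) := by
        rw [map_add, map_nsmul, ← haq, ← hbp, ← hba]
        rw [succ_nsmul a (n + 1), succ_nsmul a n]
        abel
      have e5 : T (p - (n + 1) • q) = y - n • a := by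
        rw [map_sub, map_nsmul, ← haq, ← hbp, ← hba]
        rw [succ_nsmul a n]
        abel
      have e3 : ‖p + (n + 1) • q‖ = ‖p - (n + 1) • q‖ := by
        rw [← norm_abs_eq_norm (p - (n + 1) • q),
          aux_abs_sub_of_disjoint (aux_inf_nsmul_eq_zero hp0 hq0 hdisj (n + 1))]
      have e6 : ‖y - n • a‖ ≤ ‖y + n • a‖ := by
        apply norm_le_norm_of_abs_le_abs
        have hna : 0 ≤ n • a := nsmul_nonneg ha0 n
        have h1 : |y - n • a| ≤ |y| + |n • a| := by
          rw [sub_eq_add_neg]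
          exact (abs_add_le y (-(n • a))).trans (by rw [abs_neg])
        rw [abs_of_nonneg hy, abs_of_nonneg hna] at h1
        rw [abs_of_nonneg (add_nonneg hy hna)]
        exact h1
      calc ‖y + (n + 2) • a‖ = ‖p + (n + 1) • q‖ := by rw [e1, hiso]
        _ = ‖p - (n + 1) • q‖ := e3
        _ = ‖y - n • a‖ := by rw [← e5, hiso]
        _ ≤ ‖y + n • a‖ := e6
    have bound : ∀ n : ℕ, ‖y + (2 * n) • a‖ ≤ ‖y‖ := by
      intro n
      induction n with
      | zero => simp
      | succ n ih =>
          have : 2 * (n + 1) = 2 * n + 2 := by ring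
          rw [this]
          exact (step (2 * n)).trans ih
    have hnorm_a : ‖a‖ = 0 := by
      by_contra h
      have hapos : 0 < ‖a‖ := lt_of_le_of_ne (norm_nonneg a) (Ne.symm h)
      obtain ⟨n, hn⟩ := exists_nat_gt (‖y‖ / ‖a‖)
      have h1 : (2 * n : ℝ) * ‖a‖ ≤ ‖y‖ := by
        have hle : ‖(2 * n) • a‖ ≤ ‖y + (2 * n) • a‖ := by
          apply norm_le_norm_of_abs_le_abs
          have hna : 0 ≤ (2 * n) • a := nsmul_nonneg ha0 _
          rw [abs_of_nonneg hna, abs_of_nonneg (add_nonneg hy hna)]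
          exact le_add_of_nonneg_left hy
        have heq : ‖(2 * n : ℕ) • a‖ = (2 * n : ℝ) * ‖a‖ := by
          rw [← Nat.cast_smul_eq_nsmul ℝ, norm_smul]
          simp
        calc (2 * n : ℝ) * ‖a‖ = ‖(2 * n : ℕ) • a‖ := heq.symm
          _ ≤ ‖y + (2 * n) • a‖ := hle
          _ ≤ ‖y‖ := bound n
      have h2 : (n : ℝ) * ‖a‖ ≤ ‖y‖ := by
        refine le_trans ?_ h1
        have hn0 : (0:ℝ) ≤ (n:ℝ) := Nat.cast_nonneg n
        nlinarith
      rw [div_lt_iff₀ hapos] at hn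
      linarith
    have haz : a = 0 := norm_eq_zero.mp hnorm_a
    have hqz : q = 0 := by
      apply hbij.injective
      rw [map_zero]
      exact haz
    have hxneg : x⁻ = 0 := by rw [← hq]; exact hqz
    exact negPart_eq_zero.mp hxneg
  refine ⟨?_, key⟩
  intro u v
  apply le_antisymm
  · have h1 : u ≤ E.symm (T u ⊔ T v) := by
      have h0 : 0 ≤ E.symm (T u ⊔ T v - T u) := key _ (sub_nonneg.mpr le_sup_left)
      rw [map_sub] at h0
      have hsu : E.symm (T u) = u := by
        rw [← hEapp]; exact E.symm_apply_apply u
      rw [hsu] at h0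
      exact sub_nonneg.mp h0
    have h2 : v ≤ E.symm (T u ⊔ T v) := by
      have h0 : 0 ≤ E.symm (T u ⊔ T v - T v) := key _ (sub_nonneg.mpr le_sup_right)
      rw [map_sub] at h0
      have hsv : E.symm (T v) = v := by
        rw [← hEapp]; exact E.symm_apply_apply v
      rw [hsv] at h0
      exact sub_nonneg.mp h0
    have h3 : u ⊔ v ≤ E.symm (T u ⊔ T v) := sup_le h1 h2
    have h4 := hTmono _ _ h3
    have h5 : T (E.symm (T u ⊔ T v)) = T u ⊔ T v := by
      rw [← hEapp]; exact E.apply_symm_apply _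
    rwa [h5] at h4
  · exact sup_le (hTmono _ _ le_sup_left) (hTmono _ _ le_sup_right)
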